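/- Let k be a field and Λ a finite-dimensional k-algebra. Suppose that for every X in D^b(Λ-mod) and every perfect complex P there is a k-linear duality Hom_{D(Λ-Mod)}(P, X) ≅ Hom_{D(Λ-Mod)}(X, P)^∨, natural in both P and X. Then Λ is a symmetric algebra. -/

import Mathlib

open CategoryTheory Limits

section

variable {k Λ : Type} [Field k] [Ring Λ] [Algebra k Λ]

/-- Scalar multiplication by the central element `algebraMap k Λ r` on a left `Λ`-module,
as a `Λ`-linear endomorphism. -/
def centralSMul (r : k) (N : ModuleCat.{0} Λ) : N ⟶ N := ModuleCat.ofHom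
  { toFun x := algebraMap k Λ r • x
    map_add' x y := smul_add _ x y
    map_smul' a x := by
      simp only [RingHom.id_apply, ← mul_smul, Algebra.commutes r a] }

@[simp] lemma centralSMul_apply (r : k) (N : ModuleCat.{0} Λ) (x : N) :
    centralSMul r N x = algebraMap k Λ r • x := rfl

/-- Multiplication by `algebraMap k Λ r` as an endomorphism of a cochain complex of
`Λ`-modules. -/
def smulEndo (r : k) (K : CochainComplex (ModuleCat.{0} Λ) ℤ) : K ⟶ K where
  f i := centralSMul r (K.X i)
  comm' i j _ := by
    ext x
    show K.d i j (centralSMul r (K.X i) x) = centralSMul r (K.X j) (K.d i j x)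
    simp [map_smul]


lemma smulEndo_one (K : CochainComplex (ModuleCat.{0} Λ) ℤ) :
    smulEndo (1 : k) K = 𝟙 K := by
  ext i x
  show centralSMul (1 : k) (K.X i) x = x
  simp

lemma smulEndo_mul (r s : k) (K : CochainComplex (ModuleCat.{0} Λ) ℤ) :
    smulEndo (r * s) K = smulEndo r K ≫ smulEndo s K := by
  ext i x
  show centralSMul (r * s) (K.X i) x = centralSMul s (K.X i) (centralSMul r (K.X i) x)
  simp [← mul_smul, ← map_mul, mul_comm r s]

lemma smulEndo_add (r s : k) (K : CochainComplex (ModuleCat.{0} Λ) ℤ) :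
    smulEndo (r + s) K = smulEndo r K + smulEndo s K := by
  ext i x
  show centralSMul (r + s) (K.X i) x = centralSMul r (K.X i) x + centralSMul s (K.X i) x
  simp [add_smul]

lemma smulEndo_zero (K : CochainComplex (ModuleCat.{0} Λ) ℤ) :
    smulEndo (0 : k) K = 0 := by
  ext i x
  show centralSMul (0 : k) (K.X i) x = 0
  simp

variable [HasDerivedCategory.{0} (ModuleCat.{0} Λ)]

/-- The `k`-vector space structure on morphisms in the derived category of a `k`-algebra,
out of the image of a complex. -/
noncomputable instance qHomModule (K : CochainComplex (ModuleCat.{0} Λ) ℤ)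
    (Y : DerivedCategory (ModuleCat.{0} Λ)) :
    Module k (DerivedCategory.Q.obj K ⟶ Y) where
  smul r f := DerivedCategory.Q.map (smulEndo r K) ≫ f
  one_smul f := by
    show DerivedCategory.Q.map (smulEndo (1 : k) K) ≫ f = f
    rw [smulEndo_one, CategoryTheory.Functor.map_id, Category.id_comp]
  mul_smul r s f := by
    show DerivedCategory.Q.map (smulEndo (r * s) K) ≫ f =
      DerivedCategory.Q.map (smulEndo r K) ≫ DerivedCategory.Q.map (smulEndo s K) ≫ f
    rw [smulEndo_mul, CategoryTheory.Functor.map_comp, Category.assoc]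
  smul_zero r := comp_zero
  smul_add r f g := Preadditive.comp_add _ _ _ _ _ _
  add_smul r s f := by
    show DerivedCategory.Q.map (smulEndo (r + s) K) ≫ f = _
    rw [smulEndo_add, Functor.map_add, Preadditive.add_comp]
    rfl
  zero_smul f := by
    show DerivedCategory.Q.map (smulEndo (0 : k) K) ≫ f = 0
    rw [smulEndo_zero, Functor.map_zero, Limits.zero_comp]

end

/-- A finite-dimensional `k`-algebra is *symmetric* if it admits a nondegenerate
symmetric associative bilinear form `Λ × Λ → k`; equivalently, `Λ ≅ Λ^∨` as
`(Λ,Λ)`-bimodules. -/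
def IsSymmetricAlgebra' (k Λ : Type*) [Field k] [Ring Λ] [Algebra k Λ] : Prop :=
  ∃ B : Λ →ₗ[k] Λ →ₗ[k] k,
    (∀ a b : Λ, B a b = B b a) ∧
    (∀ a b c : Λ, B (a * b) c = B a (b * c)) ∧
    (∀ a : Λ, (∀ b : Λ, B a b = 0) → a = 0)

variable (k Λ : Type) [Field k] [Ring Λ] [Algebra k Λ]

/-- A perfect complex: bounded with finitely generated projective terms. -/
def IsPerfectComplex (P : CochainComplex (ModuleCat.{0} Λ) ℤ) : Prop :=
  {i : ℤ | ¬ Limits.IsZero (P.X i)}.Finite ∧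
    ∀ i : ℤ, Module.Finite Λ (P.X i) ∧ Module.Projective Λ (P.X i)

/-- An object of `D^b(Λ-mod)`: a bounded complex of finite-dimensional modules. -/
def IsDbComplex (X : CochainComplex (ModuleCat.{0} Λ) ℤ) : Prop :=
  {i : ℤ | ¬ Limits.IsZero (X.X i)}.Finite ∧
    ∀ i : ℤ, @FiniteDimensional k (RestrictScalars k Λ (X.X i)) _ _
      (RestrictScalars.module k Λ (X.X i))

variable [HasDerivedCategory.{0} (ModuleCat.{0} Λ)]

open DerivedCategory in
/-- A natural `k`-linear duality `Hom_{D(Λ)}(P, X) ≅ Hom_{D(Λ)}(X, P)^∨` for perfect `P` and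
`X` in `D^b(Λ-mod)`: a family of `k`-linear isomorphisms compatible with composition in both
variables. -/
def NaturalSerreDuality : Prop :=
  ∃ e : ∀ P X : CochainComplex (ModuleCat.{0} Λ) ℤ, IsPerfectComplex Λ P → IsDbComplex k Λ X →
      ((Q.obj P ⟶ Q.obj X) ≃ₗ[k] Module.Dual k (Q.obj X ⟶ Q.obj P)),
    (∀ (P P' X : CochainComplex (ModuleCat.{0} Λ) ℤ) (hP : IsPerfectComplex Λ P)
        (hP' : IsPerfectComplex Λ P') (hX : IsDbComplex k Λ X)
        (u : Q.obj P' ⟶ Q.obj P) (φ : Q.obj P ⟶ Q.obj X) (ψ : Q.obj X ⟶ Q.obj P'),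
        e P' X hP' hX (u ≫ φ) ψ = e P X hP hX φ (ψ ≫ u)) ∧
    (∀ (P X X' : CochainComplex (ModuleCat.{0} Λ) ℤ) (hP : IsPerfectComplex Λ P)
        (hX : IsDbComplex k Λ X) (hX' : IsDbComplex k Λ X')
        (v : Q.obj X ⟶ Q.obj X') (φ : Q.obj P ⟶ Q.obj X) (ψ : Q.obj X' ⟶ Q.obj P),
        e P X' hP hX' (φ ≫ v) ψ = e P X hP hX φ (v ≫ ψ))


set_option linter.unusedSectionVars false

namespace Stmt19Aux

open HomologicalComplex

/-- Right multiplication by `a` as a `Λ`-linear endomorphism of `Λ`. -/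
def rmul {Λ : Type} [Ring Λ] (a : Λ) : ModuleCat.of Λ Λ ⟶ ModuleCat.of Λ Λ := ModuleCat.ofHom
  { toFun := fun (x : Λ) => x * a
    map_add' := fun (x y : Λ) => add_mul x y a
    map_smul' := fun (c x : Λ) => by
      show (c • x) * a = c • (x * a)
      simp [smul_eq_mul, mul_assoc] }

section

variable {Λ : Type} [Ring Λ]

@[simp] lemma rmul_apply (a x : Λ) : rmul a x = x * a := rfl

lemma rmul_one : rmul (1 : Λ) = 𝟙 (ModuleCat.of Λ Λ) := by
  ext : 1; apply LinearMap.ext; intro (x : Λ)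
  show x * 1 = x
  rw [mul_one]

lemma rmul_mul (a b : Λ) : rmul (a * b) = rmul a ≫ rmul b := by
  ext : 1; apply LinearMap.ext; intro (x : Λ)
  show x * (a * b) = (x * a) * b
  rw [mul_assoc]

lemma rmul_add (a b : Λ) : rmul (a + b) = rmul a + rmul b := by
  ext : 1; apply LinearMap.ext; intro (x : Λ)
  show x * (a + b) = x * a + x * b
  rw [mul_add]

lemma rmul_zero : rmul (0 : Λ) = 0 := by
  ext : 1; apply LinearMap.ext; intro (x : Λ)
  show x * 0 = 0
  rw [mul_zero]

lemma rmul_eq_of (g : ModuleCat.of Λ Λ ⟶ ModuleCat.of Λ Λ) : ∃ a : Λ, rmul a = g := by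
  let g' : Λ →ₗ[Λ] Λ := g.hom
  refine ⟨g' 1, ?_⟩
  ext : 1; apply LinearMap.ext; intro (x : Λ)
  show x * g' 1 = g' x
  conv_rhs => rw [← mul_one x, ← smul_eq_mul, map_smul, smul_eq_mul]

/-- The single complex with `Λ` concentrated in degree `0`. -/
noncomputable abbrev Kc (Λ : Type) [Ring Λ] : CochainComplex (ModuleCat.{0} Λ) ℤ :=
  (HomologicalComplex.single (ModuleCat.{0} Λ) (ComplexShape.up ℤ) 0).obj (ModuleCat.of Λ Λ)

instance : CategoryTheory.Projective (ModuleCat.of Λ Λ) :=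
  (IsProjective.iff_projective Λ).mp inferInstance

/-- Any quasi-isomorphism (at 0) onto the single complex `Kc Λ` admits a section. -/
lemma exists_section {L' : CochainComplex (ModuleCat.{0} Λ) ℤ} (s' : L' ⟶ Kc Λ)
    (hs : IsIso (homologyMap s' 0)) :
    ∃ u : Kc Λ ⟶ L', u ≫ s' = 𝟙 (Kc Λ) := by
  set c := ComplexShape.up ℤ
  set P := ModuleCat.of Λ Λ
  let w : P ⟶ L'.homology 0 :=
    (singleObjHomologySelfIso c 0 P).inv ≫ inv (homologyMap s' 0)
  let v : P ⟶ L'.cycles 0 := Projective.factorThru w (L'.homologyπ 0)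
  have hv : v ≫ L'.homologyπ 0 = w := Projective.factorThru_comp _ _
  let u0 : P ⟶ L'.X 0 := v ≫ L'.iCycles 0
  have hu0 : ∀ (i : ℤ), c.Rel 0 i → u0 ≫ L'.d 0 i = 0 := by
    intro i _
    dsimp [u0]
    rw [Category.assoc, L'.iCycles_d, comp_zero]
  let u : Kc Λ ⟶ L' := mkHomFromSingle u0 hu0
  have hcyc : cyclesMap u 0 = (singleObjCyclesSelfIso c 0 P).hom ≫ v := by
    rw [← cancel_mono (L'.iCycles 0), cyclesMap_i, mkHomFromSingle_f]
    rw [singleObjCyclesSelfIso_hom]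
    simp [u0]
    rfl
  have hu : homologyMap u 0 = inv (homologyMap s' 0) := by
    rw [← cancel_epi ((Kc Λ).homologyπ 0), homologyπ_naturality, hcyc, Category.assoc, hv]
    dsimp [w]
    rw [← Category.assoc, singleObjHomologySelfIso_hom_singleObjHomologySelfIso_inv]
  have h2 : homologyMap (u ≫ s') 0 = 𝟙 _ := by
    rw [homologyMap_comp, hu, IsIso.inv_hom_id]
  obtain ⟨g, hg⟩ := (single (ModuleCat.{0} Λ) c 0).map_surjective (u ≫ s')
  have h3 := singleObjHomologySelfIso_hom_naturality c 0 g
  rw [hg, h2, Category.id_comp] at h3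
  have hg1 : g = 𝟙 P := by
    rw [← cancel_epi (singleObjHomologySelfIso c 0 P).hom, Category.comp_id]
    exact h3.symm
  refine ⟨u, ?_⟩
  rw [← hg, hg1, CategoryTheory.Functor.map_id]

variable [HasDerivedCategory.{0} (ModuleCat.{0} Λ)]

/-- The image of right multiplication in the derived category. -/
noncomputable def σ (a : Λ) :
    DerivedCategory.Q.obj (Kc Λ) ⟶ DerivedCategory.Q.obj (Kc Λ) :=
  DerivedCategory.Q.map ((HomologicalComplex.single (ModuleCat.{0} Λ)
    (ComplexShape.up ℤ) 0).map (rmul a))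

lemma σ_one : σ (1 : Λ) = 𝟙 _ := by
  rw [σ, rmul_one, CategoryTheory.Functor.map_id, CategoryTheory.Functor.map_id]

lemma σ_mul (a b : Λ) : σ (a * b) = σ a ≫ σ b := by
  rw [σ, rmul_mul, Functor.map_comp, Functor.map_comp]
  rfl

lemma σ_add (a b : Λ) : σ (a + b) = σ a + σ b := by
  rw [σ, rmul_add, Functor.map_add, Functor.map_add]
  rfl

/-- Surjectivity: every endomorphism of `Q.obj (Kc Λ)` in the derived category comes from a
module endomorphism of `Λ`. -/
lemma σ_surjective (ψ : DerivedCategory.Q.obj (Kc Λ) ⟶ DerivedCategory.Q.obj (Kc Λ)) :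
    ∃ a : Λ, ψ = σ a := by
  set W := HomotopyCategory.quasiIso (ModuleCat.{0} Λ) (ComplexShape.up ℤ) with hW
  haveI : W.HasRightCalculusOfFractions := by
    rw [hW, HomotopyCategory.quasiIso_eq_subcategoryAcyclic_W]
    infer_instance
  let qu := HomotopyCategory.quotient (ModuleCat.{0} Λ) (ComplexShape.up ℤ)
  let ε := (DerivedCategory.quotientCompQhIso (ModuleCat.{0} Λ)).app (Kc Λ)
  let ψh : DerivedCategory.Qh.obj (qu.obj (Kc Λ)) ⟶ DerivedCategory.Qh.obj (qu.obj (Kc Λ)) :=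
    ε.hom ≫ ψ ≫ ε.inv
  obtain ⟨φ, hφ⟩ := Localization.exists_rightFraction DerivedCategory.Qh W ψh
  obtain ⟨s', hs0⟩ := qu.map_surjective (show qu.obj φ.X'.as ⟶ qu.obj (Kc Λ) from φ.s)
  obtain ⟨f', hf0⟩ := qu.map_surjective (show qu.obj φ.X'.as ⟶ qu.obj (Kc Λ) from φ.f)
  have hs' : qu.map s' = φ.s := hs0
  have hf' : qu.map f' = φ.f := hf0
  have hqi : HomologicalComplex.quasiIso (ModuleCat.{0} Λ) (ComplexShape.up ℤ) s' := by
    rw [← HomotopyCategory.quotient_map_mem_quasiIso_iff s']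
    show W (qu.map s')
    rw [hs']
    exact φ.hs
  haveI hqis : QuasiIso s' := (HomologicalComplex.mem_quasiIso_iff s').1 hqi
  have hiso : IsIso (homologyMap s' 0) :=
    (quasiIsoAt_iff_isIso_homologyMap s' 0).1 inferInstance
  obtain ⟨u, hu⟩ := exists_section s' hiso
  obtain ⟨a, ha⟩ := rmul_eq_of ((single (ModuleCat.{0} Λ) (ComplexShape.up ℤ) 0).preimage (u ≫ f'))
  refine ⟨a, ?_⟩
  have hg : (single (ModuleCat.{0} Λ) (ComplexShape.up ℤ) 0).map (rmul a) = u ≫ f' := by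
    rw [ha]
    exact Functor.map_preimage _ _
  have h5 : DerivedCategory.Qh.map φ.s ≫ ψh = DerivedCategory.Qh.map φ.f := by
    rw [hφ]
    exact φ.map_s_comp_map _ _
  -- `Qh.map (qu.map u) ≫ Qh.map s = 𝟙`
  have h6 : DerivedCategory.Qh.map (qu.map u) ≫ DerivedCategory.Qh.map φ.s = 𝟙 _ := by
    rw [← hs', ← Functor.map_comp, ← Functor.map_comp, hu,
      CategoryTheory.Functor.map_id, CategoryTheory.Functor.map_id]
  have h7 : ψh = DerivedCategory.Qh.map (qu.map (u ≫ f')) := by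
    have h7a := congrArg (fun t => DerivedCategory.Qh.map (qu.map u) ≫ t) h5
    change DerivedCategory.Qh.map (qu.map u) ≫ (DerivedCategory.Qh.map φ.s ≫ ψh) =
      DerivedCategory.Qh.map (qu.map u) ≫ DerivedCategory.Qh.map φ.f at h7a
    rw [← Category.assoc, h6, Category.id_comp] at h7a
    rw [h7a, ← hf', ← Functor.map_comp, ← Functor.map_comp]
  have h8 : ψ = ε.inv ≫ ψh ≫ ε.hom := by
    show ψ = ε.inv ≫ (ε.hom ≫ ψ ≫ ε.inv) ≫ ε.hom
    simp only [Category.assoc, Iso.inv_hom_id, Category.comp_id, Iso.inv_hom_id_assoc]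
  rw [h8, h7, ← hg]
  have h9 := (DerivedCategory.quotientCompQhIso (ModuleCat.{0} Λ)).hom.naturality
    ((single (ModuleCat.{0} Λ) (ComplexShape.up ℤ) 0).map (rmul a))
  have h10 : DerivedCategory.Qh.map
      (qu.map ((single (ModuleCat.{0} Λ) (ComplexShape.up ℤ) 0).map (rmul a))) ≫ ε.hom =
      ε.hom ≫ DerivedCategory.Q.map
        ((single (ModuleCat.{0} Λ) (ComplexShape.up ℤ) 0).map (rmul a)) := h9
  show ε.inv ≫ DerivedCategory.Qh.map
      (qu.map ((single (ModuleCat.{0} Λ) (ComplexShape.up ℤ) 0).map (rmul a))) ≫ ε.hom = σ a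
  rw [h10]
  dsimp [σ]
  erw [Iso.inv_hom_id_assoc]

/-- Injectivity at `0`. -/
lemma σ_eq_zero {a : Λ} (h : σ a = 0) : a = 0 := by
  set g := (single (ModuleCat.{0} Λ) (ComplexShape.up ℤ) 0).map (rmul a) with hgdef
  have hQ : DerivedCategory.Q.map g = DerivedCategory.Q.map (0 : Kc Λ ⟶ Kc Λ) := by
    rw [Functor.map_zero]
    exact h
  have h1 := (DerivedCategory.homologyFunctorFactors (ModuleCat.{0} Λ) 0).hom.naturality g
  have h2 := (DerivedCategory.homologyFunctorFactors (ModuleCat.{0} Λ) 0).hom.naturality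
    (0 : Kc Λ ⟶ Kc Λ)
  dsimp at h1 h2
  rw [hQ] at h1
  have h3 : homologyMap g 0 = homologyMap (0 : Kc Λ ⟶ Kc Λ) 0 :=
    (cancel_epi ((DerivedCategory.homologyFunctorFactors
      (ModuleCat.{0} Λ) 0).hom.app (Kc Λ))).1 (h1.symm.trans h2)
  rw [homologyMap_zero] at h3
  have h4 := singleObjHomologySelfIso_hom_naturality (ComplexShape.up ℤ) 0 (rmul a)
  rw [← hgdef, h3, zero_comp] at h4
  have h5 : rmul a = 0 := by
    rw [← cancel_epi (singleObjHomologySelfIso (ComplexShape.up ℤ) 0 (ModuleCat.of Λ Λ)).hom,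
      comp_zero]
    exact h4.symm
  have h6 : (1 : Λ) * a = (0 : Λ →ₗ[Λ] Λ) (1 : Λ) := by
    rw [show ((0 : Λ →ₗ[Λ] Λ) (1 : Λ)) = rmul a (1 : Λ) by rw [h5]; rfl]
    rfl
  simpa using h6

section

variable {k : Type} [Field k] [Algebra k Λ]

lemma single_rmul_smul (r : k) (a : Λ) :
    (single (ModuleCat.{0} Λ) (ComplexShape.up ℤ) 0).map (rmul (r • a)) =
      smulEndo r (Kc Λ) ≫ (single (ModuleCat.{0} Λ) (ComplexShape.up ℤ) 0).map (rmul a) := by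
  apply HomologicalComplex.hom_ext
  intro i
  by_cases h : i = 0
  · subst h
    rw [HomologicalComplex.comp_f, single_map_f_self, single_map_f_self]
    have hc : centralSMul r ((Kc Λ).X 0) ≫
        (singleObjXSelf (ComplexShape.up ℤ) 0 (ModuleCat.of Λ Λ)).hom =
        (singleObjXSelf (ComplexShape.up ℤ) 0 (ModuleCat.of Λ Λ)).hom ≫
          centralSMul r (ModuleCat.of Λ Λ) := by
      ext : 1; apply LinearMap.ext; intro x
      show (singleObjXSelf (ComplexShape.up ℤ) 0 (ModuleCat.of Λ Λ)).hom
          (algebraMap k Λ r • x) =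
        algebraMap k Λ r • ((singleObjXSelf (ComplexShape.up ℤ) 0 (ModuleCat.of Λ Λ)).hom x)
      exact map_smul _ _ _
    have hm : centralSMul r (ModuleCat.of Λ Λ) ≫ rmul a = rmul (r • a) := by
      ext : 1; apply LinearMap.ext; intro (x : Λ)
      show (algebraMap k Λ r * x) * a = x * (r • a)
      rw [Algebra.smul_def, ← mul_assoc, Algebra.commutes]
    show (singleObjXSelf (ComplexShape.up ℤ) 0 (ModuleCat.of Λ Λ)).hom ≫
        rmul (r • a) ≫ (singleObjXSelf (ComplexShape.up ℤ) 0 (ModuleCat.of Λ Λ)).inv =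
      centralSMul r ((Kc Λ).X 0) ≫
        (singleObjXSelf (ComplexShape.up ℤ) 0 (ModuleCat.of Λ Λ)).hom ≫
          rmul a ≫ (singleObjXSelf (ComplexShape.up ℤ) 0 (ModuleCat.of Λ Λ)).inv
    rw [← Category.assoc, ← Category.assoc, hc]
    simp only [Category.assoc]
    rw [reassoc_of% hm]
  · apply (isZero_single_obj_X (ComplexShape.up ℤ) 0 (ModuleCat.of Λ Λ) i h).eq_of_src

variable [HasDerivedCategory.{0} (ModuleCat.{0} Λ)]

lemma σ_smul (r : k) (a : Λ) : σ (r • a) = r • (σ a) := by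
  show _ = DerivedCategory.Q.map (smulEndo r (Kc Λ)) ≫ σ a
  rw [σ, single_rmul_smul, Functor.map_comp]
  rfl

end

section

variable {k : Type} [Field k] [Algebra k Λ] [FiniteDimensional k Λ]

lemma hfinKc : ∀ i : ℤ, i ≠ 0 → IsZero ((Kc Λ).X i) := fun i hi =>
  isZero_single_obj_X _ 0 _ i hi

lemma hsetKc : {i : ℤ | ¬ IsZero ((Kc Λ).X i)}.Finite := by
  apply Set.Finite.subset (Set.finite_singleton (0 : ℤ))
  intro i hi
  simp only [Set.mem_singleton_iff]
  by_contra h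
  exact hi (hfinKc i h)

lemma hmodKc (i : ℤ) :
    Module.Finite Λ ((Kc Λ).X i) ∧ Module.Projective Λ ((Kc Λ).X i) := by
  by_cases h : i = 0
  · subst h
    rw [show ((Kc Λ).X 0) = ModuleCat.of Λ Λ from single_obj_X_self _ _ _]
    exact ⟨inferInstanceAs (Module.Finite Λ Λ), inferInstanceAs (Module.Projective Λ Λ)⟩
  · have hz := hfinKc (Λ := Λ) i h
    haveI : Subsingleton ((Kc Λ).X i) := by
      have h0 : 𝟙 ((Kc Λ).X i) = 0 := hz.eq_of_src _ _
      have hx : ∀ z : ((Kc Λ).X i), z = 0 := by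
        intro z
        have h1 : (𝟙 ((Kc Λ).X i)) z = ((0 : (Kc Λ).X i ⟶ (Kc Λ).X i)) z := by rw [h0]
        simpa using h1
      exact ⟨fun x y => by rw [hx x, hx y]⟩
    constructor
    · exact ⟨by rw [Subsingleton.elim (⊤ : Submodule Λ ((Kc Λ).X i)) ⊥]; exact Submodule.fg_bot⟩
    · refine (Module.projective_def).2 ⟨0, fun m => ?_⟩
      exact Subsingleton.elim _ _

lemma perfectKc : IsPerfectComplex Λ (Kc Λ) := ⟨hsetKc, fun i => hmodKc i⟩

lemma dbKc : IsDbComplex k Λ (Kc Λ) := by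
  refine ⟨hsetKc, fun i => ?_⟩
  letI : Module k (RestrictScalars k Λ ((Kc Λ).X i)) := RestrictScalars.module k Λ _
  haveI hfinΛ : Module.Finite Λ ((Kc Λ).X i) := (hmodKc i).1
  letI : Module Λ (RestrictScalars k Λ ((Kc Λ).X i)) := RestrictScalars.moduleOrig k Λ _
  haveI : Module.Finite Λ (RestrictScalars k Λ ((Kc Λ).X i)) := hfinΛ
  haveI : IsScalarTower k Λ (RestrictScalars k Λ ((Kc Λ).X i)) :=
    RestrictScalars.isScalarTower k Λ _
  exact Module.Finite.trans (R := k) Λ (RestrictScalars k Λ ((Kc Λ).X i))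

end

end

end Stmt19Aux

/-- if a finite-dimensional `k`-algebra `Λ` admits a natural `k`-linear duality
`Hom_{D(Λ-Mod)}(P, X) ≅ Hom_{D(Λ-Mod)}(X, P)^∨` for every perfect complex `P` and every `X` in
`D^b(Λ-mod)`, natural in both variables, then `Λ` is a symmetric algebra. -/
theorem stmt19 (k Λ : Type) [Field k] [Ring Λ] [Algebra k Λ] [FiniteDimensional k Λ]
    [HasDerivedCategory.{0} (ModuleCat.{0} Λ)]
    (hdual : NaturalSerreDuality k Λ) :
    IsSymmetricAlgebra' k Λ := by
  classical
  obtain ⟨e, nat1, nat2⟩ := hdual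
  set K := Stmt19Aux.Kc Λ with hK
  have hP : IsPerfectComplex Λ K := Stmt19Aux.perfectKc
  have hX : IsDbComplex k Λ K := Stmt19Aux.dbKc
  set E := e K K hP hX with hE
  set T : Module.Dual k (DerivedCategory.Q.obj K ⟶ DerivedCategory.Q.obj K) := E (𝟙 _) with hT
  have hTl : ∀ (u ψ : DerivedCategory.Q.obj K ⟶ DerivedCategory.Q.obj K),
      E u ψ = T (ψ ≫ u) := by
    intro u ψ
    have h := nat1 K K K hP hP hX u (𝟙 _) ψ
    rw [Category.comp_id] at h
    exact h
  have hTr : ∀ (u ψ : DerivedCategory.Q.obj K ⟶ DerivedCategory.Q.obj K),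
      E u ψ = T (u ≫ ψ) := by
    intro u ψ
    have h := nat2 K K K hP hX hX u (𝟙 _) ψ
    rw [Category.id_comp] at h
    exact h
  have trace : ∀ (u ψ : DerivedCategory.Q.obj K ⟶ DerivedCategory.Q.obj K),
      T (ψ ≫ u) = T (u ≫ ψ) := fun u ψ => (hTl u ψ).symm.trans (hTr u ψ)
  set Tl : Λ → k := fun a => T (Stmt19Aux.σ a) with hTldef
  have Tl_add : ∀ a b : Λ, Tl (a + b) = Tl a + Tl b := by
    intro a b
    show T (Stmt19Aux.σ (a + b)) = T (Stmt19Aux.σ a) + T (Stmt19Aux.σ b)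
    rw [Stmt19Aux.σ_add, map_add]
  have Tl_smul : ∀ (r : k) (a : Λ), Tl (r • a) = r * Tl a := by
    intro r a
    show T (Stmt19Aux.σ (r • a)) = r * T (Stmt19Aux.σ a)
    rw [Stmt19Aux.σ_smul, map_smul]
    rfl
  have Tl_symm : ∀ a b : Λ, Tl (a * b) = Tl (b * a) := by
    intro a b
    show T (Stmt19Aux.σ (a * b)) = T (Stmt19Aux.σ (b * a))
    rw [Stmt19Aux.σ_mul, Stmt19Aux.σ_mul]
    exact trace (Stmt19Aux.σ b) (Stmt19Aux.σ a)
  refine ⟨LinearMap.mk₂ k (fun a b => Tl (a * b))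
    (fun a a' b => by rw [add_mul, Tl_add])
    (fun r a b => by rw [smul_mul_assoc, Tl_smul, smul_eq_mul])
    (fun a b b' => by rw [mul_add, Tl_add])
    (fun r a b => by rw [mul_smul_comm, Tl_smul, smul_eq_mul]), ?_, ?_, ?_⟩
  · intro a b
    exact Tl_symm a b
  · intro a b c
    show Tl ((a * b) * c) = Tl (a * (b * c))
    rw [mul_assoc]
  · intro a ha
    have hEa : E (Stmt19Aux.σ a) = 0 := by
      apply LinearMap.ext
      intro ψ
      obtain ⟨c, rfl⟩ := Stmt19Aux.σ_surjective ψ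
      rw [hTl]
      show T (Stmt19Aux.σ c ≫ Stmt19Aux.σ a) = (0 : Module.Dual k _) (Stmt19Aux.σ c)
      have hac : Tl (a * c) = 0 := by
        have h' := ha c
        rwa [LinearMap.mk₂_apply] at h'
      rw [trace (Stmt19Aux.σ a) (Stmt19Aux.σ c), ← Stmt19Aux.σ_mul]
      show Tl (a * c) = (0 : Module.Dual k _) (Stmt19Aux.σ c)
      rw [hac]
      rfl
    have hσ : Stmt19Aux.σ a = 0 := by
      apply E.injective
      rw [hEa, map_zero]
    exact Stmt19Aux.σ_eq_zero hσ
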